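/- Let n ≥ 2 and let A₁,…,A_n be r×r Hermitian complex matrices and B_{ij} (1 ≤ i < j ≤ n) arbitrary r×r complex matrices. Suppose the matrix ∑_{1 ≤ i < j ≤ n} (A_iA_j + A_jA_i − B_{ij}B_{ij}* − B_{ij}*B_{ij}) is positive definite, and that for some index k the matrix ∑_{i≠k} A_i is positive semidefinite. Then ∑_{i≠k} A_i is positive definite. -/

import Mathlib

open Matrix ComplexOrder

lemma pair_sum {M : Type*} [AddCommMonoid M] {n : ℕ} (f : Fin n → Fin n → M) :
    (∑ ij ∈ Finset.univ.filter (fun ij : Fin n × Fin n => ij.1 < ij.2),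
      (f ij.1 ij.2 + f ij.2 ij.1)) + ∑ i, f i i = ∑ i, ∑ j, f i j := by
  classical
  have huniv : (∑ ij : Fin n × Fin n, f ij.1 ij.2) = ∑ i, ∑ j, f i j := by
    rw [← Finset.sum_product']
    rfl
  rw [← huniv]
  rw [← Finset.sum_filter_add_sum_filter_not Finset.univ
    (fun ij : Fin n × Fin n => ij.1 < ij.2) (fun ij => f ij.1 ij.2)]
  have hsplit : (∑ ij ∈ Finset.univ.filter (fun ij : Fin n × Fin n => ¬ ij.1 < ij.2),
      f ij.1 ij.2)
      = (∑ ij ∈ Finset.univ.filter (fun ij : Fin n × Fin n => ij.2 < ij.1), f ij.1 ij.2)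
        + ∑ i, f i i := by
    have : Finset.univ.filter (fun ij : Fin n × Fin n => ¬ ij.1 < ij.2)
        = (Finset.univ.filter (fun ij : Fin n × Fin n => ij.2 < ij.1))
          ∪ (Finset.univ.filter (fun ij : Fin n × Fin n => ij.1 = ij.2)) := by
      ext ij
      simp only [Finset.mem_filter, Finset.mem_union, Finset.mem_univ, true_and]
      omega
    rw [this, Finset.sum_union]
    · congr 1
      rw [Finset.sum_filter, Fintype.sum_prod_type]
      simp
    · rw [Finset.disjoint_filter]
      intro ij _ h
      omega
  rw [hsplit, Finset.sum_add_distrib, ← add_assoc]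
  congr 2
  refine Finset.sum_nbij' (fun ij => (ij.2, ij.1)) (fun ij => (ij.2, ij.1)) ?_ ?_ ?_ ?_ ?_ <;>
    simp


lemma my_sum_mulVec {ι : Type*} (s : Finset ι) {r : ℕ} (M : ι → Matrix (Fin r) (Fin r) ℂ)
    (v : Fin r → ℂ) : (∑ i ∈ s, M i) *ᵥ v = ∑ i ∈ s, M i *ᵥ v := by
  ext j
  simp only [Matrix.mulVec, dotProduct, Finset.sum_apply, Matrix.sum_apply,
    Finset.sum_mul]
  exact Finset.sum_comm

lemma my_dotProduct_sum {ι : Type*} (s : Finset ι) {r : ℕ} (u : Fin r → ℂ)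
    (f : ι → Fin r → ℂ) : u ⬝ᵥ (∑ i ∈ s, f i) = ∑ i ∈ s, u ⬝ᵥ f i := by
  simp only [dotProduct, Finset.sum_apply, Finset.mul_sum]
  exact Finset.sum_comm

lemma my_sum_dotProduct {ι : Type*} (s : Finset ι) {r : ℕ} (u : Fin r → ℂ)
    (f : ι → Fin r → ℂ) : (∑ i ∈ s, f i) ⬝ᵥ u = ∑ i ∈ s, f i ⬝ᵥ u := by
  simp only [dotProduct, Finset.sum_apply, Finset.sum_mul]
  exact Finset.sum_comm

theorem stmt9 (n r : ℕ) (hn : 2 ≤ n) (A : Fin n → Matrix (Fin r) (Fin r) ℂ)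
    (B : Fin n → Fin n → Matrix (Fin r) (Fin r) ℂ)
    (hA : ∀ i, (A i).IsHermitian)
    (hpos : (∑ ij ∈ Finset.univ.filter (fun ij : Fin n × Fin n => ij.1 < ij.2),
        (A ij.1 * A ij.2 + A ij.2 * A ij.1
          - B ij.1 ij.2 * (B ij.1 ij.2)ᴴ - (B ij.1 ij.2)ᴴ * B ij.1 ij.2)).PosDef)
    (k : Fin n)
    (hsemi : (∑ i ∈ Finset.univ.erase k, A i).PosSemidef) :
    (∑ i ∈ Finset.univ.erase k, A i).PosDef := by
  classical
  set S := ∑ i ∈ Finset.univ.erase k, A i with hSdef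
  refine .of_dotProduct_mulVec_pos hsemi.1 (fun v hv => ?_)
  rcases (hsemi.dotProduct_mulVec_nonneg v).lt_or_eq with h | h
  · exact h
  exfalso
  have hSv : S *ᵥ v = 0 := (hsemi.dotProduct_mulVec_zero_iff v).mp h.symm
  have hP := hpos.dotProduct_mulVec_pos hv
  set a : Fin n → (Fin r → ℂ) := fun i => A i *ᵥ v with ha
  have key : ∀ i j, star v ⬝ᵥ ((A i * A j) *ᵥ v) = star (a i) ⬝ᵥ a j := by
    intro i j
    rw [← mulVec_mulVec, dotProduct_mulVec, ha]
    congr 1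
    rw [star_mulVec, (hA i).eq]
  -- sum of a i over all i equals a k
  have hsum_a : (∑ i, a i) = a k := by
    have : (∑ i, a i) = a k + S *ᵥ v := by
      rw [hSdef, my_sum_mulVec, ← Finset.add_sum_erase _ _ (Finset.mem_univ k)]
    rw [this, hSv, add_zero]
  -- the sum over pairs of hermitian cross terms
  have hpair : (∑ ij ∈ Finset.univ.filter (fun ij : Fin n × Fin n => ij.1 < ij.2),
      (star (a ij.1) ⬝ᵥ a ij.2 + star (a ij.2) ⬝ᵥ a ij.1))
      = - ∑ i ∈ Finset.univ.erase k, star (a i) ⬝ᵥ a i := by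
    have h1 := pair_sum (fun i j => star (a i) ⬝ᵥ a j)
    have h2 : (∑ i, ∑ j, star (a i) ⬝ᵥ a j) = star (a k) ⬝ᵥ a k := by
      have : (∑ i, ∑ j, star (a i) ⬝ᵥ a j) = star (∑ i, a i) ⬝ᵥ (∑ j, a j) := by
        rw [star_sum, my_sum_dotProduct]
        exact Finset.sum_congr rfl fun i _ => by rw [my_dotProduct_sum]
      rw [this, hsum_a]
    have h3 : (∑ i, star (a i) ⬝ᵥ a i)
        = star (a k) ⬝ᵥ a k + ∑ i ∈ Finset.univ.erase k, star (a i) ⬝ᵥ a i := by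
      rw [← Finset.add_sum_erase _ _ (Finset.mem_univ k)]
    rw [h2, h3] at h1
    linear_combination h1
  -- bound the quadratic form
  have hle : star v ⬝ᵥ ((∑ ij ∈ Finset.univ.filter (fun ij : Fin n × Fin n => ij.1 < ij.2),
      (A ij.1 * A ij.2 + A ij.2 * A ij.1
        - B ij.1 ij.2 * (B ij.1 ij.2)ᴴ - (B ij.1 ij.2)ᴴ * B ij.1 ij.2)) *ᵥ v) ≤ 0 := by
    rw [my_sum_mulVec, my_dotProduct_sum]
    have hterm : ∀ ij ∈ Finset.univ.filter (fun ij : Fin n × Fin n => ij.1 < ij.2),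
        star v ⬝ᵥ ((A ij.1 * A ij.2 + A ij.2 * A ij.1
          - B ij.1 ij.2 * (B ij.1 ij.2)ᴴ - (B ij.1 ij.2)ᴴ * B ij.1 ij.2) *ᵥ v)
        ≤ star (a ij.1) ⬝ᵥ a ij.2 + star (a ij.2) ⬝ᵥ a ij.1 := by
      intro ij _
      rw [sub_mulVec, sub_mulVec, add_mulVec, dotProduct_sub, dotProduct_sub, dotProduct_add,
        key, key]
      have hb1 : 0 ≤ star v ⬝ᵥ ((B ij.1 ij.2 * (B ij.1 ij.2)ᴴ) *ᵥ v) :=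
        (posSemidef_self_mul_conjTranspose (B ij.1 ij.2)).dotProduct_mulVec_nonneg v
      have hb2 : 0 ≤ star v ⬝ᵥ (((B ij.1 ij.2)ᴴ * B ij.1 ij.2) *ᵥ v) :=
        (posSemidef_conjTranspose_mul_self (B ij.1 ij.2)).dotProduct_mulVec_nonneg v
      exact (sub_le_self _ hb2).trans ((sub_le_self _ hb1).trans le_rfl)
    calc _ ≤ ∑ ij ∈ Finset.univ.filter (fun ij : Fin n × Fin n => ij.1 < ij.2),
          (star (a ij.1) ⬝ᵥ a ij.2 + star (a ij.2) ⬝ᵥ a ij.1) := Finset.sum_le_sum hterm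
      _ = - ∑ i ∈ Finset.univ.erase k, star (a i) ⬝ᵥ a i := hpair
      _ ≤ 0 := by
          rw [neg_nonpos]
          exact Finset.sum_nonneg fun i _ => dotProduct_star_self_nonneg _
  exact absurd (lt_of_lt_of_le hP hle) (lt_irrefl 0)
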